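/- If ‖·‖ is a unitarily invariant L-norm on M_n(ℂ), then ‖·‖ = α‖·‖₁ for some α > 0, where ‖·‖₁ is the trace norm. -/

import Mathlib

open Matrix BigOperators ComplexOrder

/-- Square complex matrices. -/
abbrev Mat (n : ℕ) := Matrix (Fin n) (Fin n) ℂ

/-- `N` is a norm on `Mat n`. -/
def IsMatrixNorm {n : ℕ} (N : Mat n → ℝ) : Prop :=
  (∀ A, N A = 0 ↔ A = 0) ∧
  (∀ (c : ℂ) (A : Mat n), N (c • A) = ‖c‖ * N A) ∧
  (∀ A B : Mat n, N (A + B) ≤ N A + N B)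

/-- A set of matrices is C*-convex. -/
def CStarConvex {n : ℕ} (K : Set (Mat n)) : Prop :=
  ∀ (k : ℕ) (C A : Fin k → Mat n), (∀ i, A i ∈ K) →
    (∑ i, (C i)ᴴ * C i = 1) → (∑ i, (C i)ᴴ * A i * C i) ∈ K

/-- `N` is an M-norm. -/
def IsMNorm {n : ℕ} (N : Mat n → ℝ) : Prop :=
  ∀ (k : ℕ) (C X : Fin k → Mat n), (∑ i, (C i)ᴴ * C i = 1) →
    N (∑ i, (C i)ᴴ * X i * C i) ≤ ⨆ i, N (X i)

/-- `N` is an L-norm. -/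
def IsLNorm {n : ℕ} (N : Mat n → ℝ) : Prop :=
  ∀ (k : ℕ) (C : Fin k → Mat n) (X : Mat n), (∑ i, (C i)ᴴ * C i = 1) →
    ∑ i, N (C i * X * (C i)ᴴ) ≤ N X

/-- The dual norm with respect to the pairing `⟨Y|X⟩ = Tr(Yᴴ X)`. -/
noncomputable def dualNorm {n : ℕ} (N : Mat n → ℝ) (Y : Mat n) : ℝ :=
  sSup {r | ∃ X : Mat n, N X ≤ 1 ∧ r = ‖(Yᴴ * X).trace‖}

/-- The operator (spectral) norm of a matrix. -/
noncomputable def opNorm {n : ℕ} (A : Mat n) : ℝ :=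
  ‖Matrix.toEuclideanCLM (𝕜 := ℂ) (n := Fin n) A‖

/-- The trace norm `‖A‖₁ = Tr((AᴴA)^{1/2})`. -/
noncomputable def traceNorm {n : ℕ} (A : Mat n) : ℝ :=
  ((Matrix.posSemidef_conjTranspose_mul_self A).1.eigenvectorUnitary.1 *
    diagonal (fun i => ((Real.sqrt ((Matrix.posSemidef_conjTranspose_mul_self A).1.eigenvalues i) : ℝ) : ℂ)) *
    (star (Matrix.posSemidef_conjTranspose_mul_self A).1.eigenvectorUnitary : Mat n)).trace.re

/-- The numerical radius. -/
noncomputable def numRadius {n : ℕ} (A : Mat n) : ℝ :=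
  sSup {r | ∃ x : EuclideanSpace ℂ (Fin n), ‖x‖ = 1 ∧
    r = ‖(inner ℂ x (Matrix.toEuclideanCLM (𝕜 := ℂ) (n := Fin n) A x) : ℂ)‖}


namespace UILN
variable {n : ℕ} {N : Mat n → ℝ}

lemma nonneg (hN : IsMatrixNorm N) (A : Mat n) : 0 ≤ N A := by
  have h0 : N 0 = 0 := (hN.1 0).2 rfl
  have hneg : N (-A) = N A := by simpa using hN.2.1 (-1) A
  have h2 := hN.2.2 A (-A)
  simp only [add_neg_cancel, h0, hneg] at h2
  linarith

lemma sum_le (hN : IsMatrixNorm N) {k : ℕ} (f : Fin k → Mat n) :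
    N (∑ i, f i) ≤ ∑ i, N (f i) :=
  Finset.le_sum_of_subadditive N ((hN.1 0).2 rfl).le hN.2.2 _ _

/-- permutation matrix -/
noncomputable def permMat {n : ℕ} (σ : Equiv.Perm (Fin n)) : Mat n :=
  σ.toPEquiv.toMatrix

lemma equiv_toPEquiv_toMatrix' (σ : Equiv.Perm (Fin n)) (i j : Fin n) :
    σ.toPEquiv.toMatrix i j = (1 : Mat n) (σ i) j := by
  simp [PEquiv.toMatrix_apply, one_apply]

lemma permMat_conjTranspose (σ : Equiv.Perm (Fin n)) :
    (permMat σ)ᴴ = permMat σ⁻¹ := by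
  ext a b
  simp only [permMat, conjTranspose_apply, equiv_toPEquiv_toMatrix', one_apply]
  by_cases h : σ b = a
  · subst h; simp
  · rw [if_neg h, if_neg, star_zero]
    exact fun hc => h (by rw [← hc]; simp)

lemma permMat_mul_permMat (σ τ : Equiv.Perm (Fin n)) :
    permMat σ * permMat τ = permMat (τ * σ) := by
  simp only [permMat]
  rw [← PEquiv.toMatrix_trans, ← Equiv.toPEquiv_trans]
  rfl

lemma permMat_one : permMat (1 : Equiv.Perm (Fin n)) = 1 := by
  rw [show (1 : Equiv.Perm (Fin n)) = Equiv.refl (Fin n) from rfl]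
  simp only [permMat, Equiv.toPEquiv_refl, PEquiv.toMatrix_refl]

lemma permMat_unitary (σ : Equiv.Perm (Fin n)) :
    (permMat σ)ᴴ * permMat σ = 1 ∧ permMat σ * (permMat σ)ᴴ = 1 := by
  constructor
  · rw [permMat_conjTranspose, permMat_mul_permMat, mul_inv_cancel, permMat_one]
  · rw [permMat_conjTranspose, permMat_mul_permMat, inv_mul_cancel, permMat_one]

lemma permMat_conj (σ : Equiv.Perm (Fin n)) (A : Mat n) :
    permMat σ * A * (permMat σ)ᴴ = A.submatrix σ σ := by
  rw [permMat_conjTranspose]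
  simp only [permMat]
  rw [PEquiv.toMatrix_toPEquiv_mul, PEquiv.mul_toMatrix_toPEquiv]
  have : (σ⁻¹ : Equiv.Perm (Fin n)).symm = σ := by ext x; simp [Equiv.Perm.inv_def]
  rw [this]
  simp [Matrix.submatrix_submatrix]

lemma N_submatrix (hui : ∀ (A U V : Mat n), Uᴴ * U = 1 → U * Uᴴ = 1 → Vᴴ * V = 1 → V * Vᴴ = 1 →
      N (U * A * V) = N A) (σ : Equiv.Perm (Fin n)) (A : Mat n) :
    N (A.submatrix σ σ) = N A := by
  rw [← permMat_conj]
  have h1 := permMat_unitary σ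
  have h2 := permMat_unitary σ⁻¹
  rw [← permMat_conjTranspose] at h2
  exact hui A _ _ h1.1 h1.2 (by rw [conjTranspose_conjTranspose]; exact h1.2)
    (by rw [conjTranspose_conjTranspose]; exact h1.1)


variable {n : ℕ} {N : Mat n → ℝ}

lemma stdBasis_submatrix_swap (i j : Fin n) :
    (single j j (1:ℂ)).submatrix (Equiv.swap i j) (Equiv.swap i j)
      = single i i 1 := by
  have key : ∀ c : Fin n, j = Equiv.swap i j c ↔ i = c := by
    intro c
    constructor
    · intro h
      have := congrArg (Equiv.swap i j) h
      simpa [Equiv.swap_apply_right, Equiv.swap_apply_self] using this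
    · rintro rfl
      exact (Equiv.swap_apply_left i j).symm
  ext a b
  simp only [submatrix_apply, single, of_apply]
  rw [if_congr (and_congr (key a) (key b)) rfl rfl]

lemma N_stdBasis_eq (hui : ∀ (A U V : Mat n), Uᴴ * U = 1 → U * Uᴴ = 1 → Vᴴ * V = 1 → V * Vᴴ = 1 →
      N (U * A * V) = N A) (i j : Fin n) :
    N (single i i (1:ℂ)) = N (single j j 1) := by
  rw [← stdBasis_submatrix_swap i j, N_submatrix hui]

lemma sum_stdBasis : ∑ i, single i i (1:ℂ) = (1 : Mat n) := by
  ext a b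
  simp only [Matrix.sum_apply, single, of_apply, Matrix.one_apply]
  rw [Finset.sum_eq_single b (fun k _ hk => by rw [if_neg (by tauto)]) (by simp)]
  by_cases h : a = b
  · subst h; simp
  · rw [if_neg (by tauto), if_neg h]

lemma stdBasis_conj_mul (i : Fin n) (X : Mat n) :
    single i i (1:ℂ) * X * single i i 1 = (X i i) • single i i 1 := by
  ext a b
  simp only [Matrix.mul_apply, single, of_apply, Matrix.smul_apply, smul_eq_mul]
  rw [Finset.sum_eq_single i (fun k _ hk => by rw [if_neg (by tauto), mul_zero]) (by simp)]
  rw [Finset.sum_eq_single i (fun l _ hl => by rw [if_neg (by tauto), zero_mul]) (by simp)]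
  by_cases h1 : i = a <;> by_cases h2 : i = b <;> simp [h1, h2]

lemma stdBasis_conjTranspose (i : Fin n) :
    (single i i (1:ℂ))ᴴ = single i i 1 := by
  ext a b
  simp only [conjTranspose_apply, single, of_apply, apply_ite (star (R := ℂ)),
    star_one, star_zero, and_comm]

lemma diagonal_eq_sum (d : Fin n → ℝ) :
    Matrix.diagonal (fun i => (d i : ℂ)) = ∑ i, (d i : ℂ) • single i i 1 := by
  ext a b
  simp only [Matrix.sum_apply, Matrix.smul_apply, single, of_apply, smul_eq_mul,
    Matrix.diagonal_apply]
  rw [Finset.sum_eq_single a (fun k _ hk => by rw [if_neg (by tauto), mul_zero]) (by simp)]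
  by_cases h : a = b <;> simp [h]

lemma N_diagonal (hN : IsMatrixNorm N) (hL : IsLNorm N)
    (hui : ∀ (A U V : Mat n), Uᴴ * U = 1 → U * Uᴴ = 1 → Vᴴ * V = 1 → V * Vᴴ = 1 →
      N (U * A * V) = N A) (d : Fin n → ℝ) (hd : ∀ i, 0 ≤ d i) (j : Fin n) :
    N (Matrix.diagonal (fun i => (d i : ℂ))) = (∑ i, d i) * N (single j j 1) := by
  have key : ∀ i, N ((d i : ℂ) • single i i (1:ℂ)) = d i * N (single j j 1) := by
    intro i
    rw [hN.2.1, N_stdBasis_eq hui i j]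
    congr 1
    rw [Complex.norm_real, Real.norm_eq_abs, abs_of_nonneg (hd i)]
  apply le_antisymm
  · calc N (Matrix.diagonal (fun i => (d i : ℂ)))
        = N (∑ i, (d i : ℂ) • single i i 1) := by rw [diagonal_eq_sum]
      _ ≤ ∑ i, N ((d i : ℂ) • single i i 1) := sum_le hN _
      _ = ∑ i, d i * N (single j j 1) := by simp_rw [key]
      _ = (∑ i, d i) * N (single j j 1) := by rw [Finset.sum_mul]
  · have hC : ∑ i : Fin n, (single i i (1:ℂ))ᴴ * single i i 1 = (1 : Mat n) := by
      calc ∑ i : Fin n, (single i i (1:ℂ))ᴴ * single i i 1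
          = ∑ i : Fin n, single i i (1:ℂ) := by
            refine Finset.sum_congr rfl fun i _ => ?_
            rw [stdBasis_conjTranspose]
            have h := stdBasis_conj_mul i (1 : Mat n)
            rw [Matrix.mul_one] at h
            rw [h, Matrix.one_apply_eq, one_smul]
        _ = 1 := sum_stdBasis
    have hLbound := hL n (fun i => single i i 1) (Matrix.diagonal fun i => (d i : ℂ)) hC
    calc (∑ i, d i) * N (single j j 1)
        = ∑ i, d i * N (single j j 1) := Finset.sum_mul _ _ _
      _ = ∑ i, N (single i i 1 * (Matrix.diagonal fun k => (d k : ℂ))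
            * (single i i 1)ᴴ) := by
            refine Finset.sum_congr rfl fun i _ => ?_
            rw [stdBasis_conjTranspose, stdBasis_conj_mul, Matrix.diagonal_apply_eq, key]
      _ ≤ N (Matrix.diagonal fun i => (d i : ℂ)) := hLbound

lemma exists_svd {n : ℕ} (A : Mat n) :
    ∃ (W V : Mat n) (d : Fin n → ℝ), (∀ i, 0 ≤ d i) ∧
      Wᴴ * W = 1 ∧ W * Wᴴ = 1 ∧ Vᴴ * V = 1 ∧ V * Vᴴ = 1 ∧
      A = W * Matrix.diagonal (fun i => (d i : ℂ)) * V ∧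
      traceNorm A = ∑ i, d i := by
  classical
  set hT : (Aᴴ * A).PosSemidef := Matrix.posSemidef_conjTranspose_mul_self A with hTdef
  set V : Mat n := (hT.1.eigenvectorUnitary : Mat n) with hVdef
  have hVmem := hT.1.eigenvectorUnitary.2
  have hVV : V * Vᴴ = 1 := by
    rw [← Matrix.star_eq_conjTranspose]
    exact (Matrix.mem_unitaryGroup_iff).mp hVmem
  have hVV' : Vᴴ * V = 1 := by
    rw [← Matrix.star_eq_conjTranspose]
    exact (Matrix.mem_unitaryGroup_iff').mp hVmem
  set μ : Fin n → ℝ := hT.1.eigenvalues with hμdef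
  have hμ0 : ∀ i, 0 ≤ μ i := fun i => hT.eigenvalues_nonneg i
  set d : Fin n → ℝ := fun i => Real.sqrt (μ i) with hddef
  have hd0 : ∀ i, 0 ≤ d i := fun i => Real.sqrt_nonneg _
  have hd2 : ∀ i, d i ^ 2 = μ i := fun i => Real.sq_sqrt (hμ0 i)
  set B : Mat n := A * V with hBdef
  have hspec : Aᴴ * A = V * Matrix.diagonal ((↑) ∘ μ) * Vᴴ := by
    rw [← Matrix.star_eq_conjTranspose]
    exact hT.1.spectral_theorem
  have hBB : Bᴴ * B = Matrix.diagonal fun i => (μ i : ℂ) := by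
    rw [hBdef, Matrix.conjTranspose_mul, Matrix.mul_assoc, ← Matrix.mul_assoc Aᴴ A V, hspec]
    calc Vᴴ * (V * Matrix.diagonal ((↑) ∘ μ) * Vᴴ * V)
        = (Vᴴ * V) * Matrix.diagonal ((↑) ∘ μ) * (Vᴴ * V) := by
          simp only [Matrix.mul_assoc]
      _ = Matrix.diagonal fun i => (μ i : ℂ) := by
          rw [hVV', Matrix.one_mul, Matrix.mul_one]; rfl
  -- candidate columns
  set v : Fin n → EuclideanSpace ℂ (Fin n) := fun i => WithLp.toLp 2 (fun a => (d i : ℂ)⁻¹ * B a i) with hvdef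
  have hinner : ∀ i j, (inner ℂ (v i) (v j) : ℂ)
      = (d i : ℂ)⁻¹ * (d j : ℂ)⁻¹ * (if i = j then (μ i : ℂ) else 0) := by
    intro i j
    rw [PiLp.inner_apply]
    have : ∀ a, (inner ℂ (v i a) (v j a) : ℂ)
        = (d i : ℂ)⁻¹ * (d j : ℂ)⁻¹ * ((starRingEnd ℂ) (B a i) * B a j) := by
      intro a
      rw [RCLike.inner_apply']
      simp only [hvdef, _root_.map_mul, map_inv₀, Complex.conj_ofReal]
      ring
    rw [Finset.sum_congr rfl fun a _ => this a, ← Finset.mul_sum]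
    congr 1
    have := congrFun (congrFun hBB i) j
    rw [Matrix.diagonal_apply] at this
    rw [← this]
    simp [Matrix.mul_apply, Matrix.conjTranspose_apply, mul_comm]
  set s : Set (Fin n) := {i | d i ≠ 0} with hsdef
  have hON : Orthonormal ℂ (s.domRestrict v) := by
    rw [orthonormal_iff_ite]
    intro i j
    rcases i with ⟨i, hi⟩
    rcases j with ⟨j, hj⟩
    by_cases hij : i = j
    · subst hij
      rw [Set.restrict_apply, hinner, if_pos rfl, if_pos rfl]
      have hdne : (d i : ℂ) ≠ 0 := Complex.ofReal_ne_zero.mpr hi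
      have hμd : (μ i : ℂ) = (d i : ℂ) * (d i : ℂ) := by
        rw [← hd2 i]; push_cast; ring
      rw [hμd]
      field_simp
    · rw [Set.restrict_apply, Set.restrict_apply, hinner, if_neg hij, if_neg (fun h => hij (congrArg Subtype.val h)), mul_zero]
  obtain ⟨b, hb⟩ := hON.exists_orthonormalBasis_extension_of_card_eq
    (by simp)
  set W : Mat n := Matrix.of fun a i => b i a with hWdef
  have hWW : Wᴴ * W = 1 := by
    ext i j
    have hbON := orthonormal_iff_ite.mp b.orthonormal i j
    rw [PiLp.inner_apply] at hbON
    simp only [Matrix.mul_apply, Matrix.conjTranspose_apply, hWdef, Matrix.of_apply,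
      Matrix.one_apply, Matrix.star_apply]
    rw [← hbON]
    exact Finset.sum_congr rfl fun a _ => by rw [RCLike.inner_apply']; rfl
  have hWW' : W * Wᴴ = 1 := mul_eq_one_comm.mp hWW
  have hWD : W * Matrix.diagonal (fun i => (d i : ℂ)) = B := by
    ext a i
    rw [Matrix.mul_apply]
    rw [Finset.sum_eq_single i (fun k _ hk => by
      rw [Matrix.diagonal_apply_ne _ hk, mul_zero]) (by simp)]
    rw [Matrix.diagonal_apply_eq]
    by_cases hdi : d i = 0
    · -- column of B is zero
      have hcol : B a i = 0 := by
        have hμi : μ i = 0 := by rw [← hd2 i, hdi]; ring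
        have hBBii := congrFun (congrFun hBB i) i
        rw [Matrix.diagonal_apply_eq, hμi] at hBBii
        have h0 : (∑ k, star (B k i) * B k i) = (0 : ℂ) := by
          have := hBBii
          rw [Matrix.mul_apply] at this
          simp only [Matrix.conjTranspose_apply] at this
          simpa using this
        have hterm : ∀ k, star (B k i) * B k i = (Complex.normSq (B k i) : ℂ) := fun k => by
          rw [RCLike.star_def, mul_comm, Complex.mul_conj]
        rw [Finset.sum_congr rfl (fun k _ => hterm k), ← Complex.ofReal_sum] at h0
        have hsum : ∑ k, Complex.normSq (B k i) = 0 := by exact_mod_cast h0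
        have : Complex.normSq (B a i) = 0 := by
          have hnn : ∀ k ∈ Finset.univ, (0:ℝ) ≤ Complex.normSq (B k i) :=
            fun k _ => Complex.normSq_nonneg _
          exact (Finset.sum_eq_zero_iff_of_nonneg hnn).mp hsum a (Finset.mem_univ a)
        exact Complex.normSq_eq_zero.mp this
      simp [hcol, hdi]
    · have hmem : i ∈ s := hdi
      have := hb i hmem
      have hval : W a i = (d i : ℂ)⁻¹ * B a i := by
        rw [hWdef]
        show b i a = _
        rw [this]
      rw [hval]
      field_simp
  have hA : A = W * Matrix.diagonal (fun i => (d i : ℂ)) * Vᴴ := by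
    rw [hWD, hBdef, Matrix.mul_assoc, hVV, Matrix.mul_one]
  have htrace : traceNorm A = ∑ i, d i := by
    have hsq : traceNorm A = (V * Matrix.diagonal (fun i => ((d i : ℂ))) * Vᴴ).trace.re := rfl
    show traceNorm A = ∑ i, d i
    rw [hsq, Matrix.trace_mul_cycle, hVV', Matrix.one_mul,
      Matrix.trace_diagonal, Complex.re_sum]
    simp
  refine ⟨W, Vᴴ, d, hd0, hWW, hWW', ?_, ?_, hA, htrace⟩
  · rw [Matrix.conjTranspose_conjTranspose]; exact hVV
  · rw [Matrix.conjTranspose_conjTranspose]; exact hVV'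

end UILN

theorem unitarilyInvariant_LNorm_eq_traceNorm {n : ℕ} (N : Mat n → ℝ)
    (hN : IsMatrixNorm N) (hL : IsLNorm N)
    (hui : ∀ (A U V : Mat n), Uᴴ * U = 1 → U * Uᴴ = 1 → Vᴴ * V = 1 → V * Vᴴ = 1 →
      N (U * A * V) = N A) :
    ∃ α : ℝ, 0 < α ∧ ∀ A : Mat n, N A = α * traceNorm A := by
  classical
  rcases Nat.eq_zero_or_pos n with hn | hn
  · subst hn
    refine ⟨1, one_pos, fun A => ?_⟩
    have hA0 : A = 0 := by ext i j; exact i.elim0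
    have ht : traceNorm A = 0 := by simp [traceNorm, Matrix.trace]
    rw [(hN.1 A).2 hA0, ht, mul_zero]
  · set j : Fin n := ⟨0, hn⟩
    set α := N (single j j 1) with hα
    have hEne : single j j (1:ℂ) ≠ 0 := by
      intro h
      have := congrFun (congrFun h j) j
      simp [single] at this
    have hαpos : 0 < α :=
      lt_of_le_of_ne (UILN.nonneg hN _) (fun h => hEne ((hN.1 _).1 h.symm))
    refine ⟨α, hαpos, fun A => ?_⟩
    obtain ⟨W, V, d, hd0, hW1, hW2, hV1, hV2, hAe, htr⟩ := UILN.exists_svd A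
    calc N A = N (W * Matrix.diagonal (fun i => (d i : ℂ)) * V) := by rw [← hAe]
      _ = N (Matrix.diagonal (fun i => (d i : ℂ))) := hui _ W V hW1 hW2 hV1 hV2
      _ = (∑ i, d i) * α := UILN.N_diagonal hN hL hui d hd0 j
      _ = α * traceNorm A := by rw [htr, mul_comm]
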